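/- For all positive integers s and d, the difference ∑_{k≥0} C(s+d-1, 2k+d-1)·C(2k+d-1, k) − ∑_{k≥0} C(s+d-1, 2k+d+1)·C(2k+d+1, k), computed in the rational numbers, equals d·∑_{k≥0} C(s+d-1, 2k+d-1)·C(2k+d-1, k)/(k+d). (All sums are finite since the binomial coefficients vanish for large k.) -/

import Mathlib

theorem binomial_difference_identity_general (s d : ℕ) (hs : 0 < s) (hd : 0 < d) :
    (∑ᶠ k : ℕ, (Nat.choose (s + d - 1) (2 * k + d - 1) * Nat.choose (2 * k + d - 1) k : ℚ)) -
        ∑ᶠ k : ℕ, (Nat.choose (s + d - 1) (2 * k + d + 1) * Nat.choose (2 * k + d + 1) k : ℚ) =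
      (d : ℚ) * ∑ᶠ k : ℕ,
        (Nat.choose (s + d - 1) (2 * k + d - 1) * Nat.choose (2 * k + d - 1) k : ℚ) / (k + d) := by
  obtain ⟨e, rfl⟩ : ∃ e, d = e + 1 := ⟨d - 1, by omega⟩
  simp only [show ∀ a, a + (e + 1) - 1 = a + e from fun a => by omega,
    show ∀ k, 2 * k + (e + 1) + 1 = 2 * k + e + 2 from fun k => by omega]
  set F : ℕ → ℚ := fun k => (Nat.choose (s + e) (2 * k + e) * Nat.choose (2 * k + e) k : ℚ)
    with hF
  set G : ℕ → ℚ := fun k =>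
    (Nat.choose (s + e) (2 * k + e + 2) * Nat.choose (2 * k + e + 2) k : ℚ) with hG
  set D : ℕ → ℚ := fun k => F k / ((k : ℚ) + ((e + 1 : ℕ) : ℚ)) with hD
  have hFz : ∀ k, s ≤ k → F k = 0 := by
    intro k hk
    have : s + e < 2 * k + e := by omega
    simp [hF, Nat.choose_eq_zero_of_lt this]
  have hGz : ∀ k, s ≤ k → G k = 0 := by
    intro k hk
    have : s + e < 2 * k + e + 2 := by omega
    simp [hG, Nat.choose_eq_zero_of_lt this]
  have hDz : ∀ k, s ≤ k → D k = 0 := by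
    intro k hk; simp [hD, hFz k hk]
  have hsubF : Function.support F ⊆ (Finset.range (s + 1) : Finset ℕ) := by
    intro k hk
    simp only [Finset.coe_range, Set.mem_Iio]
    by_contra h
    exact hk (hFz k (by omega))
  have hsubG : Function.support G ⊆ (Finset.range (s + 1) : Finset ℕ) := by
    intro k hk
    simp only [Finset.coe_range, Set.mem_Iio]
    by_contra h
    exact hk (hGz k (by omega))
  have hsubD : Function.support D ⊆ (Finset.range (s + 1) : Finset ℕ) := by
    intro k hk
    simp only [Finset.coe_range, Set.mem_Iio]
    by_contra h
    exact hk (hDz k (by omega))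
  rw [show (∑ᶠ k : ℕ, F k) = ∑ k ∈ Finset.range (s + 1), F k from
      finsum_eq_sum_of_support_subset F hsubF,
    show (∑ᶠ k : ℕ, G k) = ∑ k ∈ Finset.range (s + 1), G k from
      finsum_eq_sum_of_support_subset G hsubG,
    show (∑ᶠ k : ℕ, D k) = ∑ k ∈ Finset.range (s + 1), D k from
      finsum_eq_sum_of_support_subset D hsubD]
  set H : ℕ → ℚ := fun k => if k = 0 then 0 else G (k - 1) with hH
  have key : ∀ k, ((e + 1 : ℕ) : ℚ) * D k = F k - H k := by
    intro k
    cases k with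
    | zero =>
      have h1 : ((e + 1 : ℕ) : ℚ) ≠ 0 := by positivity
      simp only [hD, hH, if_pos rfl]
      field_simp
      simp
    | succ j =>
      have hm : 2 * (j + 1) + e = 2 * j + e + 2 := by omega
      have hnat : Nat.choose (2 * j + e + 2) (j + 1) * (j + 1)
          = Nat.choose (2 * j + e + 2) j * (j + e + 2) := by
        have := Nat.choose_succ_right_eq (2 * j + e + 2) j
        rw [this]
        congr 1
        omega
      have hc : (Nat.choose (2 * j + e + 2) (j + 1) : ℚ) * (j + 1)
          = (Nat.choose (2 * j + e + 2) j : ℚ) * (j + e + 2) := by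
        exact_mod_cast congrArg (Nat.cast : ℕ → ℚ) hnat
      simp only [hD, hH, hF, hG, if_neg (Nat.succ_ne_zero j), Nat.succ_sub_one, hm]
      have hden : ((j + 1 : ℕ) : ℚ) + ((e + 1 : ℕ) : ℚ) ≠ 0 := by positivity
      field_simp
      push_cast at hc ⊢
      linear_combination (-(((s + e).choose (2 * j + e + 2)) : ℚ)) * hc
  have hHsum : ∑ k ∈ Finset.range (s + 1), H k = ∑ k ∈ Finset.range (s + 1), G k := by
    rw [Finset.sum_range_succ' H s]
    simp only [hH, if_pos rfl, add_zero]
    have : ∀ j ∈ Finset.range s, H (j + 1) = G j := by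
      intro j _; simp [hH]
    rw [Finset.sum_congr rfl this, Finset.sum_range_succ, hGz s le_rfl, add_zero]
  calc (∑ k ∈ Finset.range (s + 1), F k) - ∑ k ∈ Finset.range (s + 1), G k
      = ∑ k ∈ Finset.range (s + 1), (F k - H k) := by
        rw [Finset.sum_sub_distrib, hHsum]
    _ = ∑ k ∈ Finset.range (s + 1), ((e + 1 : ℕ) : ℚ) * D k := by
        exact Finset.sum_congr rfl fun k _ => (key k).symm
    _ = ((e + 1 : ℕ) : ℚ) * ∑ k ∈ Finset.range (s + 1), D k := by
        rw [Finset.mul_sum]
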